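/- Let β > 0 and let r be a real number with r > π/(2β). Then there exists λ ∈ ℂ with λ + β·e^{−λ r} = 0 and Re λ > 0. -/

import Mathlib

open Real Filter Set

/-- Auxiliary function whose value gives the product `β·r` at a characteristic root. -/
noncomputable def stmt17f (y : ℝ) : ℝ :=
  y * Real.exp (-(y * Real.cos y / Real.sin y)) / Real.sin y

lemma stmt17f_tendsto :
    Tendsto stmt17f (nhdsWithin Real.pi (Set.Iio Real.pi)) atTop := by
  have hmem : ∀ᶠ y in nhdsWithin Real.pi (Set.Iio Real.pi), y ∈ Set.Ioo (Real.pi/2) Real.pi := by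
    have h1 : Set.Ioi (Real.pi/2) ∈ nhdsWithin Real.pi (Set.Iio Real.pi) :=
      nhdsWithin_le_nhds (Ioi_mem_nhds (by linarith [Real.pi_pos]))
    have h2 : Set.Iio Real.pi ∈ nhdsWithin Real.pi (Set.Iio Real.pi) := self_mem_nhdsWithin
    filter_upwards [h1, h2] with y hy1 hy2 using ⟨hy1, hy2⟩
  -- sin tends to 0 from above
  have hsin : Tendsto (fun y => Real.sin y) (nhdsWithin Real.pi (Set.Iio Real.pi))
      (nhdsWithin 0 (Set.Ioi 0)) := by
    rw [tendsto_nhdsWithin_iff]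
    constructor
    · have := Real.continuous_sin.continuousAt (x := Real.pi)
      simpa [Real.sin_pi] using this.tendsto.mono_left nhdsWithin_le_nhds
    · filter_upwards [hmem] with y hy
      exact Real.sin_pos_of_pos_of_lt_pi (lt_trans (by positivity) hy.1) hy.2
  have hinv : Tendsto (fun y => (Real.sin y)⁻¹) (nhdsWithin Real.pi (Set.Iio Real.pi)) atTop :=
    tendsto_inv_nhdsGT_zero.comp hsin
  -- -(y cos y) → π
  have hnum : Tendsto (fun y => -(y * Real.cos y)) (nhdsWithin Real.pi (Set.Iio Real.pi))
      (nhds Real.pi) := by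
    have hcont : Continuous (fun y : ℝ => -(y * Real.cos y)) := by continuity
    have h2 : Tendsto (fun y : ℝ => -(y * Real.cos y)) (nhdsWithin Real.pi (Set.Iio Real.pi))
        (nhds (-(Real.pi * Real.cos Real.pi))) :=
      (hcont.tendsto Real.pi).mono_left nhdsWithin_le_nhds
    simpa [Real.cos_pi] using h2
  have harg : Tendsto (fun y => -(y * Real.cos y) * (Real.sin y)⁻¹)
      (nhdsWithin Real.pi (Set.Iio Real.pi)) atTop :=
    hnum.pos_mul_atTop Real.pi_pos hinv
  have hexp : Tendsto (fun y => Real.exp (-(y * Real.cos y / Real.sin y)))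
      (nhdsWithin Real.pi (Set.Iio Real.pi)) atTop := by
    have := Real.tendsto_exp_atTop.comp harg
    refine this.congr (fun y => ?_)
    simp [Function.comp, div_eq_mul_inv, neg_mul]
  have hid : Tendsto (fun y : ℝ => y) (nhdsWithin Real.pi (Set.Iio Real.pi)) (nhds Real.pi) :=
    tendsto_id.mono_left nhdsWithin_le_nhds
  have hmul : Tendsto (fun y => y * Real.exp (-(y * Real.cos y / Real.sin y)))
      (nhdsWithin Real.pi (Set.Iio Real.pi)) atTop :=
    hid.pos_mul_atTop Real.pi_pos hexp
  have := hmul.atTop_mul_atTop₀ hinv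
  refine this.congr (fun y => ?_)
  simp [stmt17f, div_eq_mul_inv]

/-- For `β > 0` and a delay `r > π/(2β)`, the characteristic equation
`λ + β e^{-λ r} = 0` of the linearized discrete-delay replicator equation has a root with
positive real part. -/
theorem stmt_17 (β r : ℝ) (hβ : 0 < β) (hr : Real.pi / (2 * β) < r) :
    ∃ lam : ℂ, lam + (β : ℂ) * Complex.exp (-(lam * (r : ℂ))) = 0 ∧ 0 < lam.re := by
  have hπ := Real.pi_pos
  have hr0 : 0 < r := lt_trans (by positivity) hr
  set a := β * r with ha_def
  have ha : Real.pi / 2 < a := by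
    rw [div_lt_iff₀ (by positivity)] at hr
    nlinarith
  -- find y₁ ∈ (π/2, π) with f y₁ > a
  obtain ⟨y₁, hy₁mem, hy₁⟩ : ∃ y₁, y₁ ∈ Set.Ioo (Real.pi/2) Real.pi ∧ a < stmt17f y₁ := by
    have h1 : ∀ᶠ y in nhdsWithin Real.pi (Set.Iio Real.pi), a < stmt17f y :=
      stmt17f_tendsto.eventually_gt_atTop a
    have h2 : ∀ᶠ y in nhdsWithin Real.pi (Set.Iio Real.pi),
        y ∈ Set.Ioo (Real.pi/2) Real.pi := by
      have ha1 : Set.Ioi (Real.pi/2) ∈ nhdsWithin Real.pi (Set.Iio Real.pi) :=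
        nhdsWithin_le_nhds (Ioi_mem_nhds (by linarith))
      filter_upwards [ha1, self_mem_nhdsWithin] with y hy1 hy2 using ⟨hy1, hy2⟩
    exact ((h2.and h1).exists)
  -- continuity of f on [π/2, y₁]
  have hsinpos : ∀ y ∈ Set.Icc (Real.pi/2) y₁, 0 < Real.sin y := by
    intro y hy
    exact Real.sin_pos_of_pos_of_lt_pi (lt_of_lt_of_le (by positivity) hy.1)
      (lt_of_le_of_lt hy.2 hy₁mem.2)
  have hcont : ContinuousOn stmt17f (Set.Icc (Real.pi/2) y₁) := by
    unfold stmt17f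
    refine ContinuousOn.div ?_ Real.continuous_sin.continuousOn
      (fun y hy => (hsinpos y hy).ne')
    refine continuousOn_id.mul (Real.continuous_exp.comp_continuousOn ?_)
    refine ContinuousOn.neg (ContinuousOn.div ?_ Real.continuous_sin.continuousOn
      (fun y hy => (hsinpos y hy).ne'))
    exact continuousOn_id.mul Real.continuous_cos.continuousOn
  have hf_half : stmt17f (Real.pi/2) = Real.pi/2 := by
    simp [stmt17f, Real.cos_pi_div_two, Real.sin_pi_div_two]
  -- IVT
  obtain ⟨y, hyIcc, hfy⟩ : ∃ y ∈ Set.Icc (Real.pi/2) y₁, stmt17f y = a := by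
    have := intermediate_value_Icc (le_of_lt hy₁mem.1) hcont
    have hmem : a ∈ Set.Icc (stmt17f (Real.pi/2)) (stmt17f y₁) := by
      rw [hf_half]; exact ⟨le_of_lt ha, le_of_lt hy₁⟩
    obtain ⟨y, hy, hfy⟩ := this hmem
    exact ⟨y, hy, hfy⟩
  -- y is strictly between π/2 and π
  have hy_gt : Real.pi/2 < y := by
    rcases eq_or_lt_of_le hyIcc.1 with h | h
    · exfalso; rw [← h, hf_half] at hfy; linarith
    · exact h
  have hy_lt : y < Real.pi := lt_of_le_of_lt hyIcc.2 hy₁mem.2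
  have hy_pos : 0 < y := lt_trans (by positivity) hy_gt
  have hs : 0 < Real.sin y := Real.sin_pos_of_pos_of_lt_pi hy_pos hy_lt
  have hc : Real.cos y < 0 := Real.cos_neg_of_pi_div_two_lt_of_lt hy_gt (by linarith)
  set x := -(y * Real.cos y / Real.sin y) with hx_def
  have hx_pos : 0 < x := by
    have h1 : y * Real.cos y < 0 := mul_neg_of_pos_of_neg hy_pos hc
    have h2 : y * Real.cos y / Real.sin y < 0 := div_neg_of_neg_of_pos h1 hs
    rw [hx_def]; linarith
  -- key equation from f y = a
  have key1 : y * Real.exp x = β * r * Real.sin y := by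
    have := hfy
    rw [stmt17f, div_eq_iff hs.ne'] at this
    rw [ha_def] at this
    linarith [this]
  have hexpx : Real.exp x * Real.exp (-x) = 1 := by
    rw [← Real.exp_add]; simp
  have h2 : y = β * r * Real.sin y * Real.exp (-x) := by
    linear_combination Real.exp (-x) * key1 - y * hexpx
  have him : y / r = β * Real.exp (-x) * Real.sin y := by
    rw [div_eq_iff hr0.ne']
    linear_combination h2
  have hxs : x * Real.sin y = -(y * Real.cos y) := by
    rw [hx_def]; field_simp
  have hre : x / r = -(β * Real.exp (-x) * Real.cos y) := by
    rw [div_eq_iff hr0.ne']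
    apply mul_left_cancel₀ hs.ne'
    linear_combination hxs - Real.cos y * h2
  -- construct the root
  refine ⟨⟨x / r, y / r⟩, ?_, by positivity⟩
  have hre' : (⟨x / r, y / r⟩ : ℂ).re = x / r := rfl
  have him' : (⟨x / r, y / r⟩ : ℂ).im = y / r := rfl
  apply Complex.ext
  · simp only [Complex.add_re, Complex.mul_re, Complex.ofReal_re, Complex.ofReal_im,
      Complex.exp_re, Complex.neg_re, Complex.neg_im, Complex.mul_im, Complex.exp_im,
      hre', him', Complex.zero_re]
    rw [div_mul_cancel₀ _ hr0.ne', div_mul_cancel₀ _ hr0.ne']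
    simp only [mul_zero, zero_mul, sub_zero, add_zero, zero_add, Real.cos_neg]
    linear_combination hre
  · simp only [Complex.add_im, Complex.mul_im, Complex.ofReal_re, Complex.ofReal_im,
      Complex.exp_re, Complex.exp_im, Complex.neg_re, Complex.neg_im, Complex.mul_re,
      hre', him', Complex.zero_im]
    rw [div_mul_cancel₀ _ hr0.ne', div_mul_cancel₀ _ hr0.ne']
    simp only [mul_zero, zero_mul, add_zero, sub_zero, zero_add, Real.sin_neg]
    linear_combination him
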